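/- Let λ > 0, d_H = d_V = λ/2, and integers N_H ≥ 2, N_V ≥ 2, with N = N_H N_V. Define the exact correlation matrix R ∈ ℝ^{N×N} by [R]_{n,m} = sinc(2‖u_n − u_m‖/λ) with u_n = (0, i(n) d_H, j(n) d_V), i(n) = (n−1) mod N_H, j(n) = ⌊(n−1)/N_H⌋, and define the Kronecker-model approximation R^approx = R_V ⊗ R_H, where R_V ∈ ℝ^{N_V×N_V} has entries [R_V]_{a,b} = sinc(2|a−b| d_V/λ) and R_H ∈ ℝ^{N_H×N_H} has entries [R_H]_{a,b} = sinc(2|a−b| d_H/λ). Then R^approx equals the N × N identity matrix, while R is not the identity matrix; in particular R ≠ R^approx. -/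

import Mathlib

open Real Matrix
open scoped Kronecker

/-- The normalized sinc function: `sinc x = sin(π x)/(π x)` for `x ≠ 0`, `sinc 0 = 1`. -/
noncomputable def sinc (x : ℝ) : ℝ :=
  if x = 0 then 1 else Real.sin (Real.pi * x) / (Real.pi * x)

/-- Position of the `n`-th RIS element (`n = 1, …, N`, indexed row by row) on a
rectangular grid in the `x = 0` plane of `ℝ³`, with horizontal spacing `dH`,
vertical spacing `dV` and `NH` elements per row:
`u n = (0, ((n−1) mod NH) dH, (⌊(n−1)/NH⌋) dV)`. -/
noncomputable def risPos (dH dV : ℝ) (NH : ℕ) (n : ℕ) : EuclideanSpace ℝ (Fin 3) :=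
  (WithLp.equiv 2 (Fin 3 → ℝ)).symm
    ![0, (((n - 1) % NH : ℕ) : ℝ) * dH, (((n - 1) / NH : ℕ) : ℝ) * dV]


lemma sinc_nat (k : ℕ) (hk : k ≠ 0) : _root_.sinc (k : ℝ) = 0 := by
  have : (k : ℝ) ≠ 0 := Nat.cast_ne_zero.mpr hk
  rw [_root_.sinc, if_neg this, mul_comm, Real.sin_nat_mul_pi, zero_div]

lemma sinc_sqrt_two_ne_zero : _root_.sinc (Real.sqrt 2) ≠ 0 := by
  have h2 : Real.sqrt 2 ≠ 0 := by positivity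
  rw [_root_.sinc, if_neg h2]
  refine div_ne_zero (fun hs => ?_) (by positivity)
  obtain ⟨n, hn⟩ := Real.sin_eq_zero_iff.mp (by rwa [mul_comm] at hs)
  have hsq : (n : ℝ) = Real.sqrt 2 := mul_right_cancel₀ Real.pi_ne_zero hn
  exact irrational_sqrt_two ⟨(n : ℚ), by push_cast; exact hsq⟩

/-- At half-wavelength spacings `d_H = d_V = λ/2` with `N_H, N_V ≥ 2`,
the Kronecker approximation `R^approx = R_V ⊗ R_H` of the exact correlation matrix
`[R]_{n,m} = sinc(2‖u_n − u_m‖/λ)` equals the identity matrix, while the exact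
matrix `R` is not the identity; in particular `R ≠ R^approx` (under any
identification of the index sets). -/
theorem stmt_12 (lam dH dV : ℝ) (NH NV : ℕ)
    (hlam : 0 < lam) (hdH : dH = lam / 2) (hdV : dV = lam / 2)
    (hNH : 2 ≤ NH) (hNV : 2 ≤ NV)
    (R : Matrix (Fin (NH * NV)) (Fin (NH * NV)) ℝ)
    (hR : ∀ n m, R n m =
      _root_.sinc (2 * ‖risPos dH dV NH (n.val + 1) - risPos dH dV NH (m.val + 1)‖ / lam))
    (RV : Matrix (Fin NV) (Fin NV) ℝ)
    (hRV : ∀ a b, RV a b = _root_.sinc (2 * (((a.val : ℤ) - b.val).natAbs : ℝ) * dV / lam))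
    (RH : Matrix (Fin NH) (Fin NH) ℝ)
    (hRH : ∀ a b, RH a b = _root_.sinc (2 * (((a.val : ℤ) - b.val).natAbs : ℝ) * dH / lam)) :
    RV ⊗ₖ RH = (1 : Matrix (Fin NV × Fin NH) (Fin NV × Fin NH) ℝ)
      ∧ R ≠ (1 : Matrix (Fin (NH * NV)) (Fin (NH * NV)) ℝ)
      ∧ ∀ e : Fin (NH * NV) ≃ Fin NV × Fin NH, R ≠ (RV ⊗ₖ RH).submatrix e e := by
  have hlam' : lam ≠ 0 := ne_of_gt hlam
  -- Kronecker model is identity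
  have hK : RV ⊗ₖ RH = (1 : Matrix (Fin NV × Fin NH) (Fin NV × Fin NH) ℝ) := by
    ext ⟨a, b⟩ ⟨c, d⟩
    rw [Matrix.kroneckerMap_apply, hRV, hRH]
    have key : ∀ (dd : ℝ), dd = lam / 2 → ∀ (p q : ℕ),
        _root_.sinc (2 * ((((p : ℤ) - q).natAbs : ℝ)) * dd / lam) = if p = q then 1 else 0 := by
      intro dd hdd p q
      have harg : 2 * ((((p : ℤ) - q).natAbs : ℝ)) * dd / lam
          = (((p : ℤ) - q).natAbs : ℝ) := by rw [hdd]; field_simp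
      rw [harg]
      by_cases hpq : p = q
      · simp [hpq, _root_.sinc]
      · rw [if_neg hpq]
        apply sinc_nat
        simp only [ne_eq, Int.natAbs_eq_zero, sub_eq_zero]
        exact_mod_cast hpq
    rw [key dV hdV, key dH hdH, Matrix.one_apply]
    by_cases hac : a = c <;> by_cases hbd : b = d <;>
      simp [hac, hbd, Prod.ext_iff, Fin.val_eq_val]
  -- the off-diagonal entry n = 0, m = NH + 1 of R is sinc √2 ≠ 0
  have hm : NH + 1 < NH * NV := by nlinarith
  have hn0 : 0 < NH * NV := by positivity
  set n0 : Fin (NH * NV) := ⟨0, hn0⟩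
  set m0 : Fin (NH * NV) := ⟨NH + 1, hm⟩
  have hmod : (NH + 1) % NH = 1 := by
    rw [Nat.add_mod_left NH 1]
    exact Nat.mod_eq_of_lt (by omega)
  have hdiv : (NH + 1) / NH = 1 := by
    rw [Nat.add_div_left 1 (by omega : 0 < NH)]
    rw [Nat.div_eq_of_lt (by omega)]
  have hnorm : ‖risPos dH dV NH (n0.val + 1) - risPos dH dV NH (m0.val + 1)‖
      = Real.sqrt 2 * lam / 2 := by
    have h1 : risPos dH dV NH (n0.val + 1) = (WithLp.equiv 2 (Fin 3 → ℝ)).symm ![0, 0, 0] := by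
      simp [risPos, n0]
    have h2 : risPos dH dV NH (m0.val + 1) = (WithLp.equiv 2 (Fin 3 → ℝ)).symm ![0, dH, dV] := by
      simp only [risPos, m0, Nat.add_sub_cancel, hmod, hdiv, Nat.cast_one, one_mul]
    rw [h1, h2, EuclideanSpace.norm_eq]
    have hpt : ∀ i : Fin 3, ‖((WithLp.equiv 2 (Fin 3 → ℝ)).symm ![(0:ℝ), 0, 0]
        - (WithLp.equiv 2 (Fin 3 → ℝ)).symm ![0, dH, dV]) i‖
        = ‖(![(0:ℝ), 0, 0] i - ![0, dH, dV] i)‖ := fun i => rfl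
    have hgoal : Real.sqrt (lam ^ 2 / 2) = Real.sqrt 2 * lam / 2 := by
      rw [show lam ^ 2 / 2 = (Real.sqrt 2 * lam / 2) ^ 2 by
        nlinarith [Real.sq_sqrt (by norm_num : (0:ℝ) ≤ 2)]]
      exact Real.sqrt_sq (by positivity)
    rw [← hgoal]
    congr 1
    simp only [hpt, Fin.sum_univ_three]
    simp only [Matrix.cons_val_zero, Matrix.cons_val_one, Matrix.head_cons,
      Matrix.cons_val_two, Matrix.tail_cons, hdH, hdV, Real.norm_eq_abs, sq_abs]
    ring
  have hRentry : R n0 m0 = _root_.sinc (Real.sqrt 2) := by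
    rw [hR, hnorm]
    congr 1
    field_simp
  have hRne : R ≠ (1 : Matrix (Fin (NH * NV)) (Fin (NH * NV)) ℝ) := by
    intro h
    have hne : n0 ≠ m0 := by
      intro h'; exact absurd (congrArg Fin.val h') (by simp [n0, m0])
    have : R n0 m0 = 0 := by rw [h, Matrix.one_apply_ne hne]
    rw [hRentry] at this
    exact sinc_sqrt_two_ne_zero this
  refine ⟨hK, hRne, fun e => ?_⟩
  rw [hK, Matrix.submatrix_one_equiv]
  exact hRne
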